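/- arXiv:0901.2038 — 2 statements merged into one kernel-verified Lean document; each statement's English description precedes it below -/
import Mathlib

section
/- (Feynman parametrization) For any n ≥ 1 and positive real numbers b₁,…,bₙ > 0: 1/(b₁ b₂ ⋯ bₙ) = (n−1)! · ∫_{Δₙ} (z₁b₁ + ⋯ + zₙbₙ)^{-n} dσ(z), where Δₙ = {z ∈ ℝⁿ : zᵢ ≥ 0, Σzᵢ = 1} is the standard simplex with the measure dσ given by dz₁⋯dz_{n−1} (with zₙ = 1 − z₁ − ⋯ − z_{n−1}). -/
open scoped BigOperators
open MeasureTheory Set Filter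

set_option maxHeartbeats 1000000

theorem Set.mem_def {α : Type*} {a : α} {s : Set α} : a ∈ s ↔ s a := Iff.rfl



noncomputable def feynL (k : ℕ) (c : Fin (k+1) → ℝ) (z : Fin k → ℝ) : ℝ :=
  (∑ i, z i * c i.castSucc) + (1 - ∑ i, z i) * c (Fin.last k)

def feynS (k : ℕ) : Set (Fin k → ℝ) := {z | (∀ i, 0 ≤ z i) ∧ ∑ i, z i ≤ 1}

lemma continuous_feynL (k : ℕ) (c : Fin (k+1) → ℝ) : Continuous (feynL k c) := by
  unfold feynL; fun_prop

lemma feynS_closed (k : ℕ) : IsClosed (feynS k) := by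
  have h1 : IsClosed {z : Fin k → ℝ | ∀ i, 0 ≤ z i} := by
    have : {z : Fin k → ℝ | ∀ i, 0 ≤ z i} = ⋂ i, {z | 0 ≤ z i} := by
      ext z; simp
    rw [this]
    exact isClosed_iInter fun i => isClosed_le continuous_const (continuous_apply i)
  have h2 : IsClosed {z : Fin k → ℝ | ∑ i, z i ≤ 1} :=
    isClosed_le (by fun_prop) continuous_const
  exact h1.inter h2

lemma feynS_measurable (k : ℕ) : MeasurableSet (feynS k) := (feynS_closed k).measurableSet

lemma feynS_compact (k : ℕ) : IsCompact (feynS k) := by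
  refine IsCompact.of_isClosed_subset (isCompact_Icc (a := (0 : Fin k → ℝ)) (b := 1))
    (feynS_closed k) ?_
  rintro z ⟨hz0, hz1⟩
  refine ⟨fun i => hz0 i, fun i => ?_⟩
  calc z i ≤ ∑ j, z j := Finset.single_le_sum (fun j _ => hz0 j) (Finset.mem_univ i)
    _ ≤ 1 := hz1

lemma feynL_mono {k : ℕ} {c c' : Fin (k+1) → ℝ} (h : ∀ i, c i ≤ c' i) {z : Fin k → ℝ}
    (hz : z ∈ feynS k) : feynL k c z ≤ feynL k c' z := by
  refine add_le_add (Finset.sum_le_sum fun i _ => mul_le_mul_of_nonneg_left (h _) (hz.1 i)) ?_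
  exact mul_le_mul_of_nonneg_left (h _) (sub_nonneg.2 hz.2)

lemma feynL_pos {k : ℕ} {c : Fin (k+1) → ℝ} (hc : ∀ i, 0 < c i) {z : Fin k → ℝ}
    (hz : z ∈ feynS k) : 0 < feynL k c z := by
  obtain ⟨j, hj⟩ : ∃ j, ∀ i, c j ≤ c i := Finite.exists_min c
  have hε : 0 < c j := hc j
  have h1 : feynL k (fun _ => c j) z = c j := by
    simp only [feynL, ← Finset.sum_mul]; ring
  have h2 : feynL k (fun _ => c j) z ≤ feynL k c z := feynL_mono (fun i => hj i) hz
  linarith [h1 ▸ h2]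

lemma feynL_meas_pow_inv (k : ℕ) (c : Fin (k+1) → ℝ) (p : ℕ) :
    Measurable (fun z => ((feynL k c z) ^ p)⁻¹) :=
  (((continuous_feynL k c).measurable).pow_const p).inv

lemma feyn_integrableOn {k : ℕ} {c : Fin (k+1) → ℝ} (hc : ∀ i, 0 < c i) (p : ℕ) :
    IntegrableOn (fun z => ((feynL k c z) ^ p)⁻¹) (feynS k) := by
  refine ContinuousOn.integrableOn_compact (feynS_compact k) ?_
  exact (((continuous_feynL k c).continuousOn).pow p).inv₀
    (fun z hz => pow_ne_zero p (feynL_pos hc hz).ne')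


lemma feyn_inner (m : ℕ) (A c s : ℝ) (hA : 0 < A) (hB : 0 < A + s * c) (hc : c ≠ 0)
    (hs : 0 ≤ s) :
    ∫ t in (0:ℝ)..s, ((A + t * c) ^ (m + 2))⁻¹ =
      ((A ^ (m + 1))⁻¹ - ((A + s * c) ^ (m + 1))⁻¹) / ((m + 1) * c) := by
  have hpos : ∀ t ∈ Set.uIcc (0:ℝ) s, 0 < A + t * c := by
    intro t ht
    rw [Set.uIcc_of_le hs] at ht
    rcases le_or_gt 0 c with h | h
    · nlinarith [ht.1]
    · nlinarith [ht.2]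
  set F : ℝ → ℝ := fun t => -((A + t * c) ^ (m + 1))⁻¹ / ((m + 1) * c) with hF
  have hm : ((m:ℝ) + 1) ≠ 0 := by positivity
  have hder : ∀ t ∈ Set.uIcc (0:ℝ) s, HasDerivAt F (((A + t * c) ^ (m + 2))⁻¹) t := by
    intro t ht
    have hu : HasDerivAt (fun t : ℝ => A + t * c) c t := by
      simpa using ((hasDerivAt_id t).mul_const c).const_add A
    have hne : A + t * c ≠ 0 := (hpos t ht).ne'
    have h1 := hu.pow (m + 1)
    have h2 := h1.inv (pow_ne_zero _ hne)
    have h3 := (h2.div_const ((m + 1) * c)).neg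
    refine HasDerivAt.congr_deriv (h3.congr_of_eventuallyEq (Filter.Eventually.of_forall fun x => ?_)) ?_
    · exact neg_div _ _
    · rw [show m + 1 - 1 = m from rfl]
      simp only [Pi.pow_apply]
      push_cast
      field_simp
      ring
  have hint : IntervalIntegrable (fun t => ((A + t * c) ^ (m + 2))⁻¹) volume 0 s := by
    apply ContinuousOn.intervalIntegrable
    exact ((continuousOn_const.add (continuousOn_id.mul continuousOn_const)).pow _).inv₀
      (fun t ht => pow_ne_zero _ (hpos t ht).ne')
  rw [intervalIntegral.integral_eq_sub_of_hasDerivAt hder hint]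
  simp only [hF]
  field_simp
  ring

lemma feyn_fubini (m : ℕ) (g : (Fin (m+1) → ℝ) → ℝ) (hint : IntegrableOn g (feynS (m+1))) :
    ∫ z in feynS (m+1), g z =
      ∫ w in feynS m, ∫ t in Set.Ioc 0 (1 - ∑ i, w i), g (Fin.cons t w) := by
  set e := MeasurableEquiv.piFinSuccAbove (fun _ : Fin (m+1) => ℝ) 0 with he
  have hsymm : ∀ p : ℝ × (Fin m → ℝ), e.symm p = Fin.cons p.1 p.2 := by
    intro p; simp [he, MeasurableEquiv.piFinSuccAbove, Fin.consEquiv]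
  have hmp : MeasurePreserving e volume ((volume : Measure ℝ).prod (volume : Measure (Fin m → ℝ))) := by
    simpa [← volume_pi, he] using measurePreserving_piFinSuccAbove (fun _ : Fin (m+1) => (volume : Measure ℝ)) 0
  have hmps : MeasurePreserving e.symm ((volume : Measure ℝ).prod (volume : Measure (Fin m → ℝ))) volume :=
    hmp.symm e
  set T : Set (ℝ × (Fin m → ℝ)) :=
    {p | 0 ≤ p.1 ∧ (∀ i, 0 ≤ p.2 i) ∧ p.1 + ∑ i, p.2 i ≤ 1} with hTdef
  have hpre : e.symm ⁻¹' feynS (m+1) = T := by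
    ext p
    simp only [mem_preimage, hsymm p, hTdef, feynS, mem_setOf_eq, Fin.forall_fin_succ,
      Fin.cons_zero, Fin.cons_succ, Fin.sum_cons, and_assoc]
  have hT : MeasurableSet T := by rw [← hpre]; exact e.symm.measurable (feynS_measurable _)
  set G : ℝ × (Fin m → ℝ) → ℝ := fun p => g (Fin.cons p.1 p.2) with hGdef
  have hGe : (fun p : ℝ × (Fin m → ℝ) => g (e.symm p)) = G := by
    funext p; rw [hsymm p]
  have step1 : ∫ z in feynS (m+1), g z = ∫ p in T, G p ∂((volume : Measure ℝ).prod volume) := by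
    rw [← hmps.setIntegral_preimage_emb e.symm.measurableEmbedding g (feynS (m+1)), hpre]
    exact setIntegral_congr_fun hT (fun p _ => by rw [hsymm p])
  have hIndInt : Integrable (T.indicator G) ((volume : Measure ℝ).prod volume) := by
    have h0 : Integrable ((feynS (m+1)).indicator g) volume :=
      (integrable_indicator_iff (feynS_measurable _)).2 hint
    have h1 := (hmps.integrable_comp_emb e.symm.measurableEmbedding).2 h0
    have h2 : (feynS (m+1)).indicator g ∘ e.symm = T.indicator G := by
      funext p
      by_cases hp : p ∈ T
      · have hp' : e.symm p ∈ feynS (m+1) := by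
          rw [← hpre] at hp; exact hp
        rw [Function.comp_apply, Set.indicator_of_mem hp' g, Set.indicator_of_mem hp G, hsymm p]
      · have hp' : e.symm p ∉ feynS (m+1) := by
          rw [← hpre] at hp; exact hp
        rw [Function.comp_apply, Set.indicator_of_notMem hp' g, Set.indicator_of_notMem hp G]
    exact h2 ▸ h1
  have step2 : ∫ p in T, G p ∂((volume : Measure ℝ).prod volume) =
      ∫ w, ∫ t, T.indicator G (t, w) := by
    rw [← integral_indicator hT]
    exact integral_prod_symm _ hIndInt
  have hsec : ∀ w : Fin m → ℝ, (∫ t, T.indicator G (t, w)) =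
      (feynS m).indicator (fun w => ∫ t in Set.Ioc 0 (1 - ∑ i, w i), g (Fin.cons t w)) w := by
    intro w
    by_cases hw : ∀ i, 0 ≤ w i
    · have hfun : (fun t => T.indicator G (t, w)) =
          (Set.Icc (0:ℝ) (1 - ∑ i, w i)).indicator (fun t => g (Fin.cons t w)) := by
        funext t
        by_cases ht : t ∈ Set.Icc (0:ℝ) (1 - ∑ i, w i)
        · rw [Set.indicator_of_mem ht]
          exact Set.indicator_of_mem (Set.mem_def.mpr ⟨(Set.mem_Icc.mp ht).1, hw, by linarith [(Set.mem_Icc.mp ht).2]⟩) G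
        · rw [Set.indicator_of_notMem ht]
          exact Set.indicator_of_notMem
            (fun hmem => ht (Set.mem_Icc.mpr ⟨(Set.mem_def.mp hmem).1, by linarith [(Set.mem_def.mp hmem).2.2]⟩)) G
      rw [hfun, integral_indicator measurableSet_Icc, integral_Icc_eq_integral_Ioc]
      by_cases hsum : ∑ i, w i ≤ 1
      · rw [Set.indicator_of_mem (Set.mem_def.mpr ⟨hw, hsum⟩)]
      · have h1 : Set.Ioc (0:ℝ) (1 - ∑ i, w i) = ∅ :=
          Set.Ioc_eq_empty (by push_neg at hsum ⊢; linarith)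
        rw [Set.indicator_of_notMem (fun hmem => hsum (Set.mem_def.mp hmem).2), h1]
        simp
    · have h0 : (fun t => T.indicator G (t, w)) = fun _ => (0:ℝ) := by
        funext t; exact Set.indicator_of_notMem (fun hmem => hw (Set.mem_def.mp hmem).2.1) G
      rw [h0, integral_zero, Set.indicator_of_notMem (fun hmem => hw (Set.mem_def.mp hmem).1)]
  rw [step1, step2]
  simp_rw [hsec]
  exact integral_indicator (feynS_measurable m)

lemma feyn_main : ∀ (n : ℕ) (b : Fin (n+1) → ℝ), (∀ i, 0 < b i) →
    (∏ i, b i)⁻¹ = (n.factorial : ℝ) * ∫ z in feynS n, ((feynL n b z) ^ (n+1))⁻¹ := by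
  intro n
  induction n with
  | zero =>
    intro b hb
    have hS : feynS 0 = Set.univ := Set.eq_univ_of_forall fun z => Set.mem_def.mpr ⟨fun i => i.elim0, by simp⟩
    have hL : ∀ z : Fin 0 → ℝ, ((feynL 0 b z) ^ (0+1))⁻¹ = (b 0)⁻¹ := by
      intro z
      have h0 : Fin.last 0 = 0 := rfl
      simp [feynL, h0]
    rw [hS, MeasureTheory.setIntegral_univ]
    simp only [hL]
    rw [MeasureTheory.integral_const]
    have hvol : (volume : Measure (Fin 0 → ℝ)) Set.univ = 1 := by
      simp [volume_pi, Measure.pi_univ]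
    simp [hvol, Fin.prod_univ_one, measureReal_def]
  | succ m ih =>
    have hlast0 : (Fin.last (m+1)) ≠ (0 : Fin (m+2)) := by
      simp [Fin.ext_iff]
    have key : ∀ (b : Fin (m+2) → ℝ), (∀ i, 0 < b i) → b 0 ≠ b (Fin.last (m+1)) →
        (∏ i, b i)⁻¹ =
          ((m+1).factorial : ℝ) * ∫ z in feynS (m+1), ((feynL (m+1) b z) ^ (m+1+1))⁻¹ := by
      intro b hb hne
      set b' : Fin (m+1) → ℝ := fun i => b i.succ with hb'def
      set b'' : Fin (m+1) → ℝ := Function.update b' (Fin.last m) (b 0) with hb''def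
      have hb' : ∀ i, 0 < b' i := fun i => hb _
      have hlastne : ∀ i : Fin m, i.castSucc ≠ Fin.last m := fun i => (Fin.castSucc_lt_last i).ne
      have hb'' : ∀ i, 0 < b'' i := by
        intro i
        rcases eq_or_ne i (Fin.last m) with h | h
        · rw [h, hb''def, Function.update_self]; exact hb 0
        · rw [hb''def, Function.update_of_ne h]; exact hb' i
      set c0 : ℝ := b 0 - b (Fin.last (m+1)) with hc0
      have hc0ne : c0 ≠ 0 := sub_ne_zero.2 hne
      have hbl : b' (Fin.last m) = b (Fin.last (m+1)) := by
        simp only [hb'def, Fin.succ_last]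
      have hcons : ∀ (t : ℝ) (w : Fin m → ℝ),
          feynL (m+1) b (Fin.cons t w) = feynL m b' w + t * c0 := by
        intro t w
        simp only [feynL, hb'def, hc0, Fin.sum_univ_succ, Fin.cons_zero, Fin.cons_succ,
          Fin.succ_castSucc, Fin.castSucc_zero, Fin.succ_last]
        ring
      have hLb'' : ∀ w : Fin m → ℝ,
          feynL m b'' w = feynL m b' w + (1 - ∑ i, w i) * c0 := by
        intro w
        have hup : ∀ i : Fin m, b'' i.castSucc = b' i.castSucc := by
          intro i; rw [hb''def, Function.update_of_ne (hlastne i)]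
        have hup2 : b'' (Fin.last m) = b 0 := by rw [hb''def, Function.update_self]
        simp only [feynL, hup, hup2, hc0, hbl]
        ring
      have hinner : ∀ w ∈ feynS m,
          (∫ t in Set.Ioc 0 (1 - ∑ i, w i), ((feynL (m+1) b (Fin.cons t w)) ^ (m+1+1))⁻¹) =
            (((feynL m b' w) ^ (m+1))⁻¹ - ((feynL m b'' w) ^ (m+1))⁻¹) / ((m+1) * c0) := by
        intro w hw
        have hs : 0 ≤ 1 - ∑ i, w i := sub_nonneg.2 (Set.mem_def.mp hw).2
        have hA : 0 < feynL m b' w := feynL_pos hb' hw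
        have hB : 0 < feynL m b' w + (1 - ∑ i, w i) * c0 := by
          rw [← hLb'' w]; exact feynL_pos hb'' hw
        rw [← intervalIntegral.integral_of_le hs]
        simp_rw [hcons]
        rw [show m+1+1 = m+2 from rfl,
          feyn_inner m (feynL m b' w) c0 (1 - ∑ i, w i) hA hB hc0ne hs, ← hLb'' w]
      have hfub := feyn_fubini m (fun z => ((feynL (m+1) b z) ^ (m+1+1))⁻¹)
        (by rw [show m+1+1 = m+2 from rfl]; exact feyn_integrableOn hb (m+2))
      have hSint : (∫ z in feynS (m+1), ((feynL (m+1) b z) ^ (m+1+1))⁻¹) =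
          ((∫ w in feynS m, ((feynL m b' w) ^ (m+1))⁻¹) -
            ∫ w in feynS m, ((feynL m b'' w) ^ (m+1))⁻¹) / ((m+1) * c0) := by
        rw [hfub, MeasureTheory.setIntegral_congr_fun (feynS_measurable m)
          (fun w hw => hinner w hw)]
        simp_rw [sub_div ((feynL m b' _ ^ (m+1))⁻¹)]
        rw [MeasureTheory.integral_sub
          ((feyn_integrableOn hb' (m+1)).div_const _)
          ((feyn_integrableOn hb'' (m+1)).div_const _),
          MeasureTheory.integral_div, MeasureTheory.integral_div]
        ring
      have hm : (m.factorial : ℝ) ≠ 0 := Nat.cast_ne_zero.2 m.factorial_ne_zero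
      have hIA : (∫ w in feynS m, ((feynL m b' w) ^ (m+1))⁻¹) =
          (∏ i, b' i)⁻¹ / m.factorial := by
        rw [eq_div_iff hm, mul_comm]; exact (ih b' hb').symm
      have hIB : (∫ w in feynS m, ((feynL m b'' w) ^ (m+1))⁻¹) =
          (∏ i, b'' i)⁻¹ / m.factorial := by
        rw [eq_div_iff hm, mul_comm]; exact (ih b'' hb'').symm
      have hP : (0:ℝ) < ∏ i : Fin m, b' i.castSucc := Finset.prod_pos fun i _ => hb' _
      have hprod' : (∏ i, b' i) = (∏ i : Fin m, b' i.castSucc) * b (Fin.last (m+1)) := by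
        rw [Fin.prod_univ_castSucc, hbl]
      have hprod'' : (∏ i, b'' i) = (∏ i : Fin m, b' i.castSucc) * b 0 := by
        rw [Fin.prod_univ_castSucc]
        congr 1
        · exact Finset.prod_congr rfl fun i _ => by
            rw [hb''def, Function.update_of_ne (hlastne i)]
        · rw [hb''def, Function.update_self]
      have hprodb : (∏ i, b i) = b 0 * ((∏ i : Fin m, b' i.castSucc) * b (Fin.last (m+1))) := by
        rw [Fin.prod_univ_succ, ← hprod']
      rw [hSint, hIA, hIB, hprod', hprod'', hprodb]
      have hfact : (((m+1).factorial : ℕ) : ℝ) = (m+1) * (m.factorial : ℝ) := by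
        push_cast [Nat.factorial_succ]; ring
      rw [hfact, hc0]
      have h1 : b 0 ≠ 0 := (hb 0).ne'
      have h2 : b (Fin.last (m+1)) ≠ 0 := (hb _).ne'
      have h3 : (∏ i : Fin m, b' i.castSucc) ≠ 0 := hP.ne'
      have h4 : ((m:ℝ)+1) ≠ 0 := by positivity
      have h5 : b 0 - b (Fin.last (m+1)) ≠ 0 := sub_ne_zero.2 hne
      field_simp
    intro b hb
    by_cases hcase : b 0 = b (Fin.last (m+1))
    · -- approximate b by perturbing the 0-th coordinate
      set c : ℕ → Fin (m+2) → ℝ := fun k => Function.update b 0 (b 0 + 1/((k:ℝ)+1)) with hcdef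
      have hck : ∀ k i, 0 < c k i := by
        intro k i
        rcases eq_or_ne i 0 with h|h
        · subst h; rw [hcdef]; simp only [Function.update_self]
          have h1 : (0:ℝ) < 1/((k:ℝ)+1) := by positivity
          linarith [hb 0]
        · rw [hcdef]; simp only [Function.update_of_ne h]; exact hb i
      have hge : ∀ k i, b i ≤ c k i := by
        intro k i
        rcases eq_or_ne i 0 with h|h
        · subst h; rw [hcdef]; simp only [Function.update_self]
          have : (0:ℝ) < 1/((k:ℝ)+1) := by positivity
          linarith
        · rw [hcdef]; simp only [Function.update_of_ne h]; exact le_rfl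
      have hupL : ∀ k (z : Fin (m+1) → ℝ),
          feynL (m+1) (c k) z = feynL (m+1) b z + z 0 * (1/((k:ℝ)+1)) := by
        intro k z
        have hterm : ∀ i : Fin (m+1), (c k) i.castSucc =
            b i.castSucc + (if i = 0 then 1/((k:ℝ)+1) else 0) := by
          intro i
          rcases eq_or_ne i 0 with h|h
          · subst h
            rw [hcdef]; simp [Fin.castSucc_zero]
          · have hne' : i.castSucc ≠ (0 : Fin (m+2)) := by
              rwa [ne_eq, Fin.castSucc_eq_zero_iff]
            rw [hcdef]; simp [Function.update_of_ne hne', h]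
        have hlu : (c k) (Fin.last (m+1)) = b (Fin.last (m+1)) := by
          rw [hcdef]; exact Function.update_of_ne hlast0 _ _
        simp only [feynL, hterm, hlu, mul_add, Finset.sum_add_distrib, mul_ite, mul_zero,
          Finset.sum_ite_eq', Finset.mem_univ, if_true]
        ring
      have hkey : ∀ k, (∏ i, c k i)⁻¹ =
          ((m+1).factorial : ℝ) * ∫ z in feynS (m+1), ((feynL (m+1) (c k) z) ^ (m+1+1))⁻¹ := by
        intro k
        refine key (c k) (hck k) ?_
        rw [hcdef]
        simp only [Function.update_self, Function.update_of_ne hlast0]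
        have : (0:ℝ) < 1/((k:ℝ)+1) := by positivity
        rw [← hcase]
        intro h; linarith [h]
      have htend1 : Filter.Tendsto (fun k => (∏ i, c k i)⁻¹) Filter.atTop
          (nhds ((∏ i, b i)⁻¹)) := by
        have h1 : ∀ i : Fin (m+2), Filter.Tendsto (fun k => c k i) Filter.atTop (nhds (b i)) := by
          intro i
          rcases eq_or_ne i 0 with h|h
          · subst h
            simp only [hcdef, Function.update_self]
            simpa using (tendsto_const_nhds (x := b 0)).add tendsto_one_div_add_atTop_nhds_zero_nat
          · simp only [hcdef, Function.update_of_ne h]; exact tendsto_const_nhds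
        have h2 := tendsto_finset_prod (f := fun i k => c k i) (x := Filter.atTop)
          (a := b) Finset.univ (fun i _ => h1 i)
        exact h2.inv₀ (ne_of_gt (Finset.prod_pos fun i _ => hb i))
      have htend2 : Filter.Tendsto
          (fun k => ∫ z in feynS (m+1), ((feynL (m+1) (c k) z) ^ (m+1+1))⁻¹) Filter.atTop
          (nhds (∫ z in feynS (m+1), ((feynL (m+1) b z) ^ (m+1+1))⁻¹)) := by
        apply MeasureTheory.tendsto_integral_of_dominated_convergence
          (fun z => ((feynL (m+1) b z) ^ (m+1+1))⁻¹)
        · intro k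
          exact (feynL_meas_pow_inv (m+1) (c k) (m+1+1)).aestronglyMeasurable
        · exact feyn_integrableOn hb (m+1+1)
        · intro k
          rw [MeasureTheory.ae_restrict_iff' (feynS_measurable _)]
          refine Filter.Eventually.of_forall (fun z hz => ?_)
          have h0 : 0 < feynL (m+1) b z := feynL_pos hb hz
          have h1 : feynL (m+1) b z ≤ feynL (m+1) (c k) z := feynL_mono (hge k) hz
          have hck0 : 0 < feynL (m+1) (c k) z := lt_of_lt_of_le h0 h1
          rw [Real.norm_eq_abs, abs_of_nonneg (inv_nonneg.2 (pow_nonneg hck0.le _))]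
          exact inv_anti₀ (pow_pos h0 _) (pow_le_pow_left₀ h0.le h1 _)
        · rw [MeasureTheory.ae_restrict_iff' (feynS_measurable _)]
          refine Filter.Eventually.of_forall (fun z hz => ?_)
          have h0 : 0 < feynL (m+1) b z := feynL_pos hb hz
          have hbase : Filter.Tendsto (fun k : ℕ => feynL (m+1) b z + z 0 * (1/((k:ℝ)+1)))
              Filter.atTop (nhds (feynL (m+1) b z)) := by
            simpa using tendsto_const_nhds.add
              (tendsto_one_div_add_atTop_nhds_zero_nat.const_mul (z 0))
          have h2 := (hbase.pow (m+1+1)).inv₀ (by positivity)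
          simp_rw [hupL]
          exact h2
      have h3 : Filter.Tendsto (fun k => (∏ i, c k i)⁻¹) Filter.atTop
          (nhds (((m+1).factorial : ℝ) *
            ∫ z in feynS (m+1), ((feynL (m+1) b z) ^ (m+1+1))⁻¹)) := by
        simp_rw [hkey]
        exact htend2.const_mul _
      exact tendsto_nhds_unique htend1 h3
    · exact key b hb hcase


/-- Feynman parametrization: for positive reals `b₀,…,bₙ`,
`1/(b₀⋯bₙ) = n! ∫_{Δ} (z₁b₀ + ⋯ + zₙb_{n-1} + (1−Σz)bₙ)^{−(n+1)} dz`,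
the integral running over the standard simplex
`{z ∈ ℝⁿ : zᵢ ≥ 0, Σ zᵢ ≤ 1}` with Lebesgue measure. -/
theorem feynman_parametrization
    (n : ℕ) (b : Fin (n + 1) → ℝ) (hb : ∀ i, 0 < b i) :
    (∏ i, b i)⁻¹ =
      (n.factorial : ℝ) *
        ∫ z in {z : Fin n → ℝ | (∀ i, 0 ≤ z i) ∧ ∑ i, z i ≤ 1},
          (((∑ i, z i * b i.castSucc) + (1 - ∑ i, z i) * b (Fin.last n)) ^ (n + 1))⁻¹ :=
  feyn_main n b hb
end

section
/- The integral over the 2-dimensional standard simplex ∫_{α,β,γ>0, α+β+γ=1} αβγ·(αβ + βγ + γα)^{-3} dα dβ (with γ = 1−α−β) equals 1/2. -/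
open MeasureTheory Set

namespace TriangleAux

noncomputable section

def E (p : ℝ × ℝ) : ℝ := p.1 * p.2 + p.2 * (1 - p.1 - p.2) + (1 - p.1 - p.2) * p.1

def F (p : ℝ × ℝ) : ℝ × ℝ :=
  (p.2 * (1 - p.1 - p.2) * (E p)⁻¹, (1 - p.1 - p.2) * p.1 * (E p)⁻¹)

def S : Set (ℝ × ℝ) := {p : ℝ × ℝ | 0 < p.1 ∧ 0 < p.2 ∧ p.1 + p.2 < 1}

def B (p : ℝ × ℝ) : ℝ × ℝ →L[ℝ] ℝ × ℝ :=
  LinearMap.toContinuousLinearMap (Matrix.toLin (Module.Basis.finTwoProd ℝ) (Module.Basis.finTwoProd ℝ)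
    !![(-(p.2) * E p - p.2 * (1 - p.1 - p.2) * ((1 - p.1 - p.2) - p.1)) / E p ^ 2,
       ((1 - p.1 - p.2) - p.2) * (E p - p.2 * (1 - p.1 - p.2)) / E p ^ 2;
       ((1 - p.1 - p.2) - p.1) * (E p - (1 - p.1 - p.2) * p.1) / E p ^ 2,
       (-(p.1) * E p - (1 - p.1 - p.2) * p.1 * ((1 - p.1 - p.2) - p.2)) / E p ^ 2])

lemma E_pos {p : ℝ × ℝ} (hp : p ∈ S) : 0 < E p := by
  obtain ⟨h1, h2, h3⟩ := hp
  have hg : 0 < 1 - p.1 - p.2 := by linarith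
  have := mul_pos h1 h2
  have := mul_pos h2 hg
  have := mul_pos hg h1
  unfold E; linarith

lemma F_mem {p : ℝ × ℝ} (hp : p ∈ S) : F p ∈ S := by
  obtain ⟨h1, h2, h3⟩ := hp
  have hg : 0 < 1 - p.1 - p.2 := by linarith
  have he : 0 < E p := E_pos ⟨h1, h2, h3⟩
  refine ⟨?_, ?_, ?_⟩
  · exact mul_pos (mul_pos h2 hg) (inv_pos.mpr he)
  · exact mul_pos (mul_pos hg h1) (inv_pos.mpr he)
  · show p.2 * (1 - p.1 - p.2) * (E p)⁻¹ + (1 - p.1 - p.2) * p.1 * (E p)⁻¹ < 1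
    rw [← add_mul, ← div_eq_mul_inv, div_lt_one he]
    have : 0 < p.1 * p.2 := mul_pos h1 h2
    unfold E; linarith

lemma E_F {p : ℝ × ℝ} (hp : p ∈ S) :
    E (F p) = p.1 * p.2 * (1 - p.1 - p.2) * ((E p) ^ 2)⁻¹ := by
  have he : E p ≠ 0 := (E_pos hp).ne'
  simp only [F, E] at *
  have he' : p.2 * (p.1 + (1 - p.1 - p.2)) + p.1 * (1 - p.1 - p.2) ≠ 0 := by
    convert he using 1; ring
  field_simp
  ring

lemma F_invol {p : ℝ × ℝ} (hp : p ∈ S) : F (F p) = p := by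
  obtain ⟨h1, h2, h3⟩ := hp
  have hg : 0 < 1 - p.1 - p.2 := by linarith
  have he : E p ≠ 0 := (E_pos ⟨h1, h2, h3⟩).ne'
  have key := E_F (p := p) ⟨h1, h2, h3⟩
  have hxyz : p.1 * p.2 * (1 - p.1 - p.2) ≠ 0 := by positivity
  have hz : 1 - (F p).1 - (F p).2 = p.1 * p.2 * (E p)⁻¹ := by
    simp only [F, E] at *
    field_simp
    ring
  apply Prod.ext
  · show (F p).2 * (1 - (F p).1 - (F p).2) * (E (F p))⁻¹ = p.1
    rw [key, hz]
    simp only [F]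
    field_simp
  · show (1 - (F p).1 - (F p).2) * (F p).1 * (E (F p))⁻¹ = p.2
    rw [key, hz]
    simp only [F]
    field_simp

lemma F_image : F '' S = S := by
  ext q
  constructor
  · rintro ⟨p, hp, rfl⟩; exact F_mem hp
  · intro hq; exact ⟨F q, F_mem hq, F_invol hq⟩

lemma F_inj : Set.InjOn F S := by
  intro p hp q hq h
  rw [← F_invol hp, ← F_invol hq, h]

lemma hasFDerivAt_F {p : ℝ × ℝ} (he : E p ≠ 0) : HasFDerivAt F (B p) p := by
  have ha : HasFDerivAt (fun p : ℝ × ℝ => p.1) (ContinuousLinearMap.fst ℝ ℝ ℝ) p :=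
    hasFDerivAt_fst
  have hb : HasFDerivAt (fun p : ℝ × ℝ => p.2) (ContinuousLinearMap.snd ℝ ℝ ℝ) p :=
    hasFDerivAt_snd
  have hg : HasFDerivAt (fun p : ℝ × ℝ => 1 - p.1 - p.2)
      (0 - ContinuousLinearMap.fst ℝ ℝ ℝ - ContinuousLinearMap.snd ℝ ℝ ℝ) p :=
    ((hasFDerivAt_const 1 p).sub ha).sub hb
  have hE : HasFDerivAt E _ p := (((ha.mul hb).add (hb.mul hg)).add (hg.mul ha))
  have hInv : HasFDerivAt (fun p : ℝ × ℝ => (E p)⁻¹) _ p := (hasFDerivAt_inv he).comp p hE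
  have h1 : HasFDerivAt (fun p : ℝ × ℝ => p.2 * (1 - p.1 - p.2) * (E p)⁻¹) _ p :=
    (hb.mul hg).mul hInv
  have h2 : HasFDerivAt (fun p : ℝ × ℝ => (1 - p.1 - p.2) * p.1 * (E p)⁻¹) _ p :=
    (hg.mul ha).mul hInv
  have H := h1.prodMk h2
  have : F = fun p : ℝ × ℝ =>
      (p.2 * (1 - p.1 - p.2) * (E p)⁻¹, (1 - p.1 - p.2) * p.1 * (E p)⁻¹) := rfl
  rw [this]
  refine H.congr_fderiv ?_
  symm
  unfold B
  rw [Matrix.toLin_finTwoProd_toContinuousLinearMap]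
  apply ContinuousLinearMap.ext
  intro v
  apply Prod.ext <;>
  · simp only [E, ContinuousLinearMap.prod_apply, ContinuousLinearMap.add_apply,
      ContinuousLinearMap.smul_apply, ContinuousLinearMap.coe_fst', ContinuousLinearMap.coe_snd',
      ContinuousLinearMap.sub_apply, ContinuousLinearMap.zero_apply,
      ContinuousLinearMap.coe_comp', Function.comp_apply, ContinuousLinearMap.smulRight_apply,
      ContinuousLinearMap.one_apply, smul_eq_mul, ContinuousLinearMap.toSpanSingleton_apply]
    unfold E at he
    have he' : p.2 * (p.1 + (1 - p.1 - p.2)) + p.1 * (1 - p.1 - p.2) ≠ 0 := by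
      convert he using 1; ring
    simp only [Pi.mul_apply]
    field_simp
    ring

lemma B_det {p : ℝ × ℝ} (he : E p ≠ 0) :
    (B p).det = p.1 * p.2 * (1 - p.1 - p.2) / E p ^ 3 := by
  unfold B
  simp only [ContinuousLinearMap.det, ContinuousLinearMap.coe_coe,
    LinearMap.coe_toContinuousLinearMap, LinearMap.det_toLin, Matrix.det_fin_two_of]
  unfold E at he ⊢
  have he' : p.2 * (p.1 + (1 - p.1 - p.2)) + p.1 * (1 - p.1 - p.2) ≠ 0 := by
    convert he using 1; ring
  field_simp
  ring

lemma S_open : IsOpen S := by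
  have : S = {p : ℝ × ℝ | 0 < p.1} ∩ ({p : ℝ × ℝ | 0 < p.2} ∩ {p : ℝ × ℝ | p.1 + p.2 < 1}) := by
    ext p; simp [S, and_assoc]
  rw [this]
  exact (isOpen_lt continuous_const continuous_fst).inter
    ((isOpen_lt continuous_const continuous_snd).inter
      (isOpen_lt (continuous_fst.add continuous_snd) continuous_const))

lemma S_eq_regionBetween :
    S = regionBetween (fun _ => (0 : ℝ)) (fun x => 1 - x) (Ioo (0 : ℝ) 1) := by
  ext p
  simp only [S, regionBetween, mem_setOf_eq, mem_Ioo]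
  constructor
  · rintro ⟨h1, h2, h3⟩; exact ⟨⟨h1, by linarith⟩, h2, by linarith⟩
  · rintro ⟨⟨h1, h2⟩, h3, h4⟩; exact ⟨h1, h3, by linarith⟩

lemma volume_S_measure : volume S = ENNReal.ofReal (1 / 2) := by
  have g_int : IntegrableOn (fun x : ℝ => 1 - x) (Ioo 0 1) := by
    rw [← intervalIntegrable_iff_integrableOn_Ioo_of_le (by norm_num : (0:ℝ) ≤ 1)]
    exact (continuous_const.sub continuous_id).intervalIntegrable 0 1
  rw [S_eq_regionBetween, Measure.volume_eq_prod]
  rw [volume_regionBetween_eq_integral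
    (integrableOn_const measure_Ioo_lt_top.ne) g_int
    measurableSet_Ioo (fun x hx => by simp only [mem_Ioo] at hx; simp; linarith [hx.2])]
  congr 1
  have h1 : (∫ y in Ioo (0:ℝ) 1, ((fun x : ℝ => 1 - x) - (fun _ : ℝ => (0:ℝ))) y)
      = ∫ y in Ioo (0:ℝ) 1, (1 - y) := by
    apply setIntegral_congr_fun measurableSet_Ioo
    intro y _
    simp
  rw [h1, ← integral_Ioc_eq_integral_Ioo,
    ← intervalIntegral.integral_of_le (by norm_num : (0:ℝ) ≤ 1),
    intervalIntegral.integral_sub (intervalIntegrable_const)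
      intervalIntegral.intervalIntegrable_id,
    intervalIntegral.integral_const, integral_id]
  norm_num

lemma volume_S : ∫ _p in S, (1 : ℝ) = 1 / 2 := by
  rw [MeasureTheory.setIntegral_const, measureReal_def, volume_S_measure, smul_eq_mul, mul_one,
    ENNReal.toReal_ofReal (by norm_num)]

end

end TriangleAux

/-- The triangle-diagram Feynman parameter integral:
`∫_{α,β>0, α+β<1} αβγ (αβ+βγ+γα)^{−3} dα dβ = 1/2` with `γ = 1−α−β`. -/
theorem triangle_feynman_integral :
    ∫ p in {p : ℝ × ℝ | 0 < p.1 ∧ 0 < p.2 ∧ p.1 + p.2 < 1},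
        p.1 * p.2 * (1 - p.1 - p.2) /
          (p.1 * p.2 + p.2 * (1 - p.1 - p.2) + (1 - p.1 - p.2) * p.1) ^ 3
      = 1 / 2 := by
  open TriangleAux in
  have hs : MeasurableSet S := S_open.measurableSet
  have hF' : ∀ p ∈ S, HasFDerivWithinAt F (B p) S p := fun p hp =>
    (hasFDerivAt_F (E_pos hp).ne').hasFDerivWithinAt
  have key := integral_image_eq_integral_abs_det_fderiv_smul volume hs hF' F_inj
    (fun _ => (1 : ℝ))
  rw [F_image] at key
  have : ∫ p in S, p.1 * p.2 * (1 - p.1 - p.2) /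
      (p.1 * p.2 + p.2 * (1 - p.1 - p.2) + (1 - p.1 - p.2) * p.1) ^ 3
      = ∫ p in S, |(B p).det| • (1 : ℝ) := by
    apply setIntegral_congr_fun hs
    intro p hp
    have he := E_pos hp
    dsimp only
    rw [B_det he.ne', smul_eq_mul, mul_one, abs_of_pos]
    · rfl
    · obtain ⟨h1, h2, h3⟩ := hp
      have hg : 0 < 1 - p.1 - p.2 := by linarith
      positivity
  show (∫ p in S, p.1 * p.2 * (1 - p.1 - p.2) /
      (p.1 * p.2 + p.2 * (1 - p.1 - p.2) + (1 - p.1 - p.2) * p.1) ^ 3) = 1 / 2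
  rw [this, ← key, volume_S]
end
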